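/- arXiv:2003.06852 — 3 statements merged into one kernel-verified Lean document; each statement's English description precedes it below -/
import Mathlib

section
/- Let d ≥ 2 and let M be a d×d positive semidefinite complex matrix (indices 0,...,d−1). Suppose for every pair of the d Fourier vectors v_t, v_s (where (v_t)_j = ω^{tj}, ω = e^{2πi/d}, t ≠ s) we have ⟨v_t, M v_s⟩ = 0, and additionally ⟨e_0, M e_{d−1}⟩ = ⟨e_{d−1}, M e_0⟩ = 0 and ⟨e_q, M e_{d−1}⟩ = ⟨e_{d−1}, M e_q⟩ = 0 for 1 ≤ q ≤ d−2. Then M is a scalar multiple of the identity matrix. -/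
open ComplexOrder

theorem psd_orthogonality_conditions_force_scalar (d : ℕ) (hd : 2 ≤ d)
    (ω : ℂ) (hω : ω = Complex.exp (2 * Real.pi * Complex.I / d))
    (v : Fin d → Fin d → ℂ) (hv : ∀ t j, v t j = ω ^ ((t : ℕ) * (j : ℕ)))
    (e : Fin d → Fin d → ℂ) (he : ∀ k j, e k j = if j = k then 1 else 0)
    (M : Matrix (Fin d) (Fin d) ℂ) (hM : M.PosSemidef)
    (hfour : ∀ s t : Fin d, s ≠ t →
      ∑ j : Fin d, (starRingEnd ℂ) (v s j) * M.mulVec (v t) j = 0)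
    (h0 : ∑ j : Fin d, (starRingEnd ℂ) (e ⟨0, by omega⟩ j) * M.mulVec (e ⟨d - 1, by omega⟩) j = 0)
    (h0' : ∑ j : Fin d, (starRingEnd ℂ) (e ⟨d - 1, by omega⟩ j) * M.mulVec (e ⟨0, by omega⟩) j = 0)
    (hq : ∀ q : Fin d, 1 ≤ (q : ℕ) → (q : ℕ) ≤ d - 2 →
      (∑ j : Fin d, (starRingEnd ℂ) (e q j) * M.mulVec (e ⟨d - 1, by omega⟩) j = 0) ∧
      (∑ j : Fin d, (starRingEnd ℂ) (e ⟨d - 1, by omega⟩ j) * M.mulVec (e q) j = 0)) :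
    ∃ c : ℂ, M = c • (1 : Matrix (Fin d) (Fin d) ℂ) := by
  have hd0 : d ≠ 0 := by omega
  have hprim : IsPrimitiveRoot ω d := hω ▸ Complex.isPrimitiveRoot_exp d hd0
  have hωd : ω ^ d = 1 := hprim.pow_eq_one
  have hω0 : ω ≠ 0 := by rw [hω]; exact Complex.exp_ne_zero _
  have hconj : (starRingEnd ℂ) ω = ω⁻¹ := by
    rw [hω, ← Complex.exp_conj, ← Complex.exp_neg]
    congr 1
    simp [map_div₀, Complex.conj_I, map_ofNat]
    ring
  set w' : ℂ := ω⁻¹ with hw'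
  have hw0 : w' ≠ 0 := inv_ne_zero hω0
  -- geometric sum
  have hgeom : ∀ η : ℂ, η ^ d = 1 → (∑ s : Fin d, η ^ (s : ℕ)) = if η = 1 then (d : ℂ) else 0 := by
    intro η hη
    by_cases h1 : η = 1
    · simp [h1]
    · rw [if_neg h1, Fin.sum_univ_eq_sum_range, geom_sum_eq h1, hη]
      simp
  have hηd : ∀ a b : ℕ, (ω ^ a * w' ^ b) ^ d = 1 := by
    intro a b
    rw [mul_pow, pow_right_comm, hωd, one_pow, pow_right_comm, hw', inv_pow, hωd, inv_one,
      one_pow, one_mul]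
  -- orthogonality of Fourier vectors
  have horth : ∀ a b : Fin d, (∑ s : Fin d, ω ^ ((s : ℕ) * (a : ℕ)) * w' ^ ((s : ℕ) * (b : ℕ)))
      = if a = b then (d : ℂ) else 0 := by
    intro a b
    have hterm : ∀ s : Fin d, ω ^ ((s : ℕ) * (a : ℕ)) * w' ^ ((s : ℕ) * (b : ℕ))
        = (ω ^ (a : ℕ) * w' ^ (b : ℕ)) ^ (s : ℕ) := by
      intro s
      rw [mul_pow, ← pow_mul, ← pow_mul, mul_comm (a : ℕ), mul_comm (b : ℕ)]
    rw [Finset.sum_congr rfl fun s _ => hterm s, hgeom _ (hηd a b)]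
    by_cases hab : a = b
    · subst hab
      have h1 : ω ^ (a : ℕ) * w' ^ (a : ℕ) = 1 := by
        rw [hw', inv_pow]; exact mul_inv_cancel₀ (pow_ne_zero _ hω0)
      simp [h1]
    · have h1 : ω ^ (a : ℕ) * w' ^ (b : ℕ) ≠ 1 := by
        rw [hw', inv_pow]
        intro h
        exact hab (Fin.ext (hprim.pow_inj a.isLt b.isLt
          ((mul_inv_eq_one₀ (pow_ne_zero _ hω0)).mp h)))
      simp [h1, hab]
  -- Fourier inversion, two flavors
  have hinv : ∀ (x : Fin d → ℂ) (a : Fin d),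
      (∑ s : Fin d, ω ^ ((s : ℕ) * (a : ℕ)) * ∑ p : Fin d, w' ^ ((s : ℕ) * (p : ℕ)) * x p)
      = (d : ℂ) * x a := by
    intro x a
    calc (∑ s : Fin d, ω ^ ((s : ℕ) * (a : ℕ)) * ∑ p : Fin d, w' ^ ((s : ℕ) * (p : ℕ)) * x p)
        = ∑ s : Fin d, ∑ p : Fin d, ω ^ ((s : ℕ) * (a : ℕ)) * w' ^ ((s : ℕ) * (p : ℕ)) * x p := by
          refine Finset.sum_congr rfl fun s _ => ?_
          rw [Finset.mul_sum]
          exact Finset.sum_congr rfl fun p _ => by ring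
      _ = ∑ p : Fin d, ∑ s : Fin d, ω ^ ((s : ℕ) * (a : ℕ)) * w' ^ ((s : ℕ) * (p : ℕ)) * x p :=
          Finset.sum_comm
      _ = ∑ p : Fin d, (if a = p then (d : ℂ) else 0) * x p := by
          refine Finset.sum_congr rfl fun p _ => ?_
          rw [← Finset.sum_mul, horth a p]
      _ = (d : ℂ) * x a := by simp
  have hinv2 : ∀ (x : Fin d → ℂ) (a : Fin d),
      (∑ t : Fin d, w' ^ ((t : ℕ) * (a : ℕ)) * ∑ r : Fin d, ω ^ ((t : ℕ) * (r : ℕ)) * x r)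
      = (d : ℂ) * x a := by
    intro x a
    calc (∑ t : Fin d, w' ^ ((t : ℕ) * (a : ℕ)) * ∑ r : Fin d, ω ^ ((t : ℕ) * (r : ℕ)) * x r)
        = ∑ t : Fin d, ∑ r : Fin d, ω ^ ((t : ℕ) * (r : ℕ)) * w' ^ ((t : ℕ) * (a : ℕ)) * x r := by
          refine Finset.sum_congr rfl fun t _ => ?_
          rw [Finset.mul_sum]
          exact Finset.sum_congr rfl fun r _ => by ring
      _ = ∑ r : Fin d, ∑ t : Fin d, ω ^ ((t : ℕ) * (r : ℕ)) * w' ^ ((t : ℕ) * (a : ℕ)) * x r :=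
          Finset.sum_comm
      _ = ∑ r : Fin d, (if r = a then (d : ℂ) else 0) * x r := by
          refine Finset.sum_congr rfl fun r _ => ?_
          rw [← Finset.sum_mul, horth r a]
      _ = (d : ℂ) * x a := by simp
  set F : Fin d → Fin d → ℂ :=
    fun s t => ∑ j : Fin d, (starRingEnd ℂ) (v s j) * M.mulVec (v t) j with hF
  -- each Fourier vector is an eigenvector
  have heig : ∀ t j : Fin d, (d : ℂ) * M.mulVec (v t) j = ω ^ ((t : ℕ) * (j : ℕ)) * F t t := by
    intro t j
    have h1 : ∀ s : Fin d, (∑ p : Fin d, w' ^ ((s : ℕ) * (p : ℕ)) * M.mulVec (v t) p) = F s t := by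
      intro s
      refine Finset.sum_congr rfl fun p _ => ?_
      rw [hv, map_pow, hconj]
    rw [← hinv (M.mulVec (v t)) j]
    rw [Finset.sum_congr rfl fun s _ => by rw [h1 s]]
    rw [Finset.sum_eq_single t (fun s _ hst => by simp only [hF]; rw [hfour s t hst, mul_zero])
      (fun h => absurd (Finset.mem_univ t) h)]
  -- entries of M via double inversion
  have hrow : ∀ j t : Fin d, (∑ r : Fin d, ω ^ ((t : ℕ) * (r : ℕ)) * M j r) = M.mulVec (v t) j := by
    intro j t
    simp only [Matrix.mulVec, dotProduct, hv]
    exact Finset.sum_congr rfl fun r _ => by ring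
  have hentry : ∀ j k : Fin d, (d : ℂ) * ((d : ℂ) * M j k)
      = ∑ t : Fin d, (ω ^ (j : ℕ) * w' ^ (k : ℕ)) ^ (t : ℕ) * F t t := by
    intro j k
    rw [← hinv2 (fun k => M j k) k, Finset.mul_sum]
    refine Finset.sum_congr rfl fun t _ => ?_
    rw [hrow j t, ← mul_assoc, mul_comm ((d:ℂ)) (w' ^ ((t:ℕ) * (k:ℕ))), mul_assoc, heig t j]
    rw [mul_pow, ← pow_mul, ← pow_mul, mul_comm (j : ℕ) (t : ℕ), mul_comm (k : ℕ) (t : ℕ)]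
    ring
  have hdne : (d : ℂ) ≠ 0 := Nat.cast_ne_zero.mpr hd0
  have hsame : ∀ j k j' k' : Fin d,
      ω ^ (j : ℕ) * w' ^ (k : ℕ) = ω ^ (j' : ℕ) * w' ^ (k' : ℕ) → M j k = M j' k' := by
    intro j k j' k' h
    have h1 := hentry j k
    rw [h, ← hentry j' k'] at h1
    exact mul_left_cancel₀ hdne (mul_left_cancel₀ hdne h1)
  -- entries in the standard basis
  have hE : ∀ a b : Fin d,
      (∑ j : Fin d, (starRingEnd ℂ) (e a j) * M.mulVec (e b) j) = M a b := by
    intro a b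
    simp [he, Matrix.mulVec, dotProduct, apply_ite, mul_ite, ite_mul, mul_zero, zero_mul,
      Finset.sum_ite_eq', Finset.sum_ite_eq]
  have L : Fin d := ⟨d - 1, by omega⟩
  have hcol : ∀ q : Fin d, (q : ℕ) ≠ d - 1 → M q ⟨d - 1, by omega⟩ = 0 := by
    intro q hqne
    rcases Nat.eq_zero_or_pos (q : ℕ) with hq0 | hq1
    · have : q = ⟨0, by omega⟩ := Fin.ext hq0
      rw [this, ← hE ⟨0, by omega⟩ ⟨d - 1, by omega⟩]
      exact h0
    · have hq2 : (q : ℕ) ≤ d - 2 := by have := q.isLt; omega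
      rw [← hE q ⟨d - 1, by omega⟩]
      exact (hq q hq1 hq2).1
  refine ⟨M ⟨0, by omega⟩ ⟨0, by omega⟩, ?_⟩
  ext j k
  simp only [Matrix.smul_apply, Matrix.one_apply, smul_eq_mul]
  by_cases hjk : j = k
  · subst hjk
    rw [if_pos rfl, mul_one]
    refine hsame j j ⟨0, by omega⟩ ⟨0, by omega⟩ ?_
    rw [hw', inv_pow, mul_inv_cancel₀ (pow_ne_zero _ hω0)]
    simp
  · rw [if_neg hjk, mul_zero]
    rcases Nat.lt_or_ge (k : ℕ) (j : ℕ) with hlt | hge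
    · have hjq : (j : ℕ) - (k : ℕ) - 1 < d := by have := j.isLt; omega
      have hne : ((j : ℕ) - (k : ℕ) - 1) ≠ d - 1 := by have := j.isLt; omega
      have heq : ω ^ (j : ℕ) * w' ^ (k : ℕ)
          = ω ^ (((⟨(j : ℕ) - (k : ℕ) - 1, hjq⟩ : Fin d) : ℕ)) * w' ^ (d - 1) := by
        simp only [hw', inv_pow, ← div_eq_mul_inv]
        rw [div_eq_div_iff (pow_ne_zero _ hω0) (pow_ne_zero _ hω0), ← pow_add, ← pow_add]
        have e1 : (j : ℕ) + (d - 1) = ((j : ℕ) - 1) + d := by omega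
        have e2 : ((j : ℕ) - (k : ℕ) - 1) + (k : ℕ) = (j : ℕ) - 1 := by omega
        rw [e1, e2, pow_add, hωd, mul_one]
      have := hsame j k ⟨(j : ℕ) - (k : ℕ) - 1, hjq⟩ ⟨d - 1, by omega⟩ heq
      rw [this]
      exact hcol _ hne
    · have hlt2 : (j : ℕ) < (k : ℕ) := by
        rcases Nat.lt_or_ge (j : ℕ) (k : ℕ) with h | h
        · exact h
        · exact absurd (Fin.ext (le_antisymm hge h)) hjk
      have hjq : (j : ℕ) + d - 1 - (k : ℕ) < d := by have := k.isLt; omega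
      have hne : ((j : ℕ) + d - 1 - (k : ℕ)) ≠ d - 1 := by omega
      have heq : ω ^ (j : ℕ) * w' ^ (k : ℕ)
          = ω ^ (((⟨(j : ℕ) + d - 1 - (k : ℕ), hjq⟩ : Fin d) : ℕ)) * w' ^ (d - 1) := by
        simp only [hw', inv_pow, ← div_eq_mul_inv]
        rw [div_eq_div_iff (pow_ne_zero _ hω0) (pow_ne_zero _ hω0), ← pow_add, ← pow_add]
        congr 1
        have := k.isLt
        omega
      have := hsame j k ⟨(j : ℕ) + d - 1 - (k : ℕ), hjq⟩ ⟨d - 1, by omega⟩ heq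
      rw [this]
      exact hcol _ hne
end

section
/- Let d ≥ 2, n ≥ 3, and ω = e^{2πi/d}. The 2n(d−1) product states of Theorem 1 in (ℂ^d)^{⊗n} — namely, for each cyclic position δ ∈ {1,...,n} and t ∈ {0,...,d−1}, the state with Σ_j ω^{tj}|j⟩ in slot δ, |d−1⟩ in slot δ+1 (mod n), and |0⟩ elsewhere; together with, for each δ and q ∈ {1,...,d−2}, the state with Σ_j ω^{j}|j⟩ in slot δ, |q⟩ in slot δ+1 (mod n), and |0⟩ elsewhere — are pairwise orthogonal. -/
noncomputable def rootOfUnity' (d : ℕ) : ℂ := Complex.exp (2 * Real.pi * Complex.I / d)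

noncomputable def tensorProdState {n d : ℕ} (f : Fin n → Fin d → ℂ) : (Fin n → Fin d) → ℂ :=
  fun g => ∏ i, f i (g i)

noncomputable def tensorInner {n d : ℕ} (x y : (Fin n → Fin d) → ℂ) : ℂ :=
  ∑ g : Fin n → Fin d, (starRingEnd ℂ) (x g) * y g

/-- basis vector `|k⟩` in `ℂ^d` (given by a natural number label). -/
def basisVec (d k : ℕ) : Fin d → ℂ := fun j => if (j : ℕ) = k then 1 else 0

/-- the Fourier state `Σ_j ω^{tj}|j⟩` in `ℂ^d`. -/
noncomputable def fourierVec (d t : ℕ) : Fin d → ℂ := fun j => rootOfUnity' d ^ (t * (j : ℕ))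

lemma tensorInner_eq_prod {n d : ℕ} (f f' : Fin n → Fin d → ℂ) :
    tensorInner (tensorProdState f) (tensorProdState f')
      = ∏ i, ∑ j, (starRingEnd ℂ) (f i j) * f' i j := by
  unfold tensorInner tensorProdState
  rw [Finset.prod_univ_sum]
  rw [Fintype.piFinset_univ]
  apply Finset.sum_congr rfl
  intro g _
  rw [map_prod, ← Finset.prod_mul_distrib]

lemma inner_factor {n d : ℕ} (f f' : Fin n → Fin d → ℂ) (i : Fin n)
    (h : ∑ j : Fin d, (starRingEnd ℂ) (f i j) * f' i j = 0) :
    tensorInner (tensorProdState f) (tensorProdState f') = 0 := by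
  rw [tensorInner_eq_prod]
  exact Finset.prod_eq_zero (Finset.mem_univ i) h

lemma basis_orth (d k k' : ℕ) (h : k ≠ k') :
    ∑ j : Fin d, (starRingEnd ℂ) (basisVec d k j) * basisVec d k' j = 0 := by
  apply Finset.sum_eq_zero
  intro j _
  by_cases hk : (j : ℕ) = k <;> by_cases hk' : (j : ℕ) = k' <;>
    simp_all [basisVec]

lemma fourier_orth (d : ℕ) (hd : 2 ≤ d) (t t' : Fin d) (h : t ≠ t') :
    ∑ j : Fin d, (starRingEnd ℂ) (fourierVec d (t:ℕ) j) * fourierVec d (t':ℕ) j = 0 := by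
  have hd0 : (d:ℕ) ≠ 0 := by omega
  have hprim : IsPrimitiveRoot (rootOfUnity' d) d := by
    simpa [rootOfUnity'] using Complex.isPrimitiveRoot_exp d hd0
  set ζ := rootOfUnity' d with hζdef
  have hζd : ζ ^ d = 1 := hprim.pow_eq_one
  have hζ0 : ζ ≠ 0 := by
    intro h0
    rw [h0, zero_pow hd0] at hζd
    exact zero_ne_one hζd
  have hconj : (starRingEnd ℂ) ζ = ζ⁻¹ := by
    rw [hζdef, rootOfUnity', ← Complex.exp_conj, ← Complex.exp_neg]
    congr 1
    simp [map_div₀, Complex.conj_I, map_ofNat]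
    ring
  set w := (ζ ^ (t:ℕ))⁻¹ * ζ ^ (t':ℕ) with hw
  have hterm : ∀ j : Fin d, (starRingEnd ℂ) (fourierVec d (t:ℕ) j) * fourierVec d (t':ℕ) j = w ^ (j:ℕ) := by
    intro j
    simp only [fourierVec, ← hζdef, map_pow, hconj, hw]
    rw [mul_pow, inv_pow, inv_pow, ← pow_mul, ← pow_mul]
  rw [Finset.sum_congr rfl (fun j _ => hterm j)]
  rw [Fin.sum_univ_eq_sum_range (fun k => w ^ k) d]
  have hw1 : w ≠ 1 := by
    intro h1
    apply h
    have hne : ζ ^ (t:ℕ) ≠ 0 := pow_ne_zero _ hζ0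
    have : ζ ^ (t:ℕ) = ζ ^ (t':ℕ) := ((inv_mul_eq_one₀ hne).mp h1)
    exact Fin.ext (hprim.pow_inj t.isLt t'.isLt this)
  rw [geom_sum_eq hw1]
  have hwd : w ^ d = 1 := by
    rw [hw, mul_pow, inv_pow, ← pow_mul, ← pow_mul, mul_comm (t:ℕ) d, mul_comm (t':ℕ) d,
      pow_mul, pow_mul, hζd, one_pow, one_pow, inv_one, one_mul]
  rw [hwd]
  simp

/-- first family of Theorem 1: Fourier state with parameter `t` in slot `δ`,
`|d-1⟩` in slot `δ+1` (cyclically), `|0⟩` elsewhere. -/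
noncomputable def thm1StateA (n d : ℕ) [NeZero n] (δ : Fin n) (t : Fin d) :
    Fin n → Fin d → ℂ :=
  fun i => if i = δ then fourierVec d (t : ℕ)
    else if i = δ + 1 then basisVec d (d - 1) else basisVec d 0

/-- second family of Theorem 1: Fourier state with parameter `1` in slot `δ`,
`|q⟩` in slot `δ+1` (cyclically), `|0⟩` elsewhere. -/
noncomputable def thm1StateB (n d : ℕ) [NeZero n] (δ : Fin n) (q : Fin d) :
    Fin n → Fin d → ℂ :=
  fun i => if i = δ then fourierVec d 1
    else if i = δ + 1 then basisVec d (q : ℕ) else basisVec d 0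

theorem thm1_states_pairwise_orthogonal (d n : ℕ) [NeZero n] (hd : 2 ≤ d) (hn : 3 ≤ n) :
    (∀ δ δ' : Fin n, ∀ t t' : Fin d, (δ, t) ≠ (δ', t') →
      tensorInner (tensorProdState (thm1StateA n d δ t))
        (tensorProdState (thm1StateA n d δ' t')) = 0) ∧
    (∀ δ δ' : Fin n, ∀ q q' : Fin d,
      1 ≤ (q : ℕ) → (q : ℕ) ≤ d - 2 → 1 ≤ (q' : ℕ) → (q' : ℕ) ≤ d - 2 →
      (δ, q) ≠ (δ', q') →
      tensorInner (tensorProdState (thm1StateB n d δ q))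
        (tensorProdState (thm1StateB n d δ' q')) = 0) ∧
    (∀ δ δ' : Fin n, ∀ t q : Fin d, 1 ≤ (q : ℕ) → (q : ℕ) ≤ d - 2 →
      tensorInner (tensorProdState (thm1StateA n d δ t))
        (tensorProdState (thm1StateB n d δ' q)) = 0) := by
  have h1v : ((1 : Fin n) : ℕ) = 1 := by
    rw [Fin.val_one']; exact Nat.mod_eq_of_lt (by omega)
  have h10 : (1 : Fin n) ≠ 0 := by
    intro h; rw [Fin.ext_iff, h1v] at h; simp at h
  have h2v : ((1 + 1 : Fin n) : ℕ) = 2 := by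
    rw [Fin.val_add, h1v]; exact Nat.mod_eq_of_lt (by omega)
  have h20 : (1 + 1 : Fin n) ≠ 0 := by
    intro h; rw [Fin.ext_iff, h2v] at h; simp at h
  have hA1 : ∀ δ : Fin n, δ + 1 ≠ δ := by
    intro δ h; exact h10 (by rwa [add_eq_left] at h)
  have hA2 : ∀ δ : Fin n, δ + 1 + 1 ≠ δ := by
    intro δ h; rw [add_assoc, add_eq_left] at h; exact h20 h
  refine ⟨?_, ?_, ?_⟩
  · intro δ δ' t t' hne
    by_cases hδ : δ = δ'
    · subst hδ
      have ht : t ≠ t' := by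
        intro h; exact hne (by rw [h])
      apply inner_factor _ _ δ
      simp only [thm1StateA, if_pos rfl]
      exact fourier_orth d hd t t' ht
    · by_cases hc : δ' = δ + 1
      · subst hc
        apply inner_factor _ _ (δ + 1 + 1)
        have e1 : δ + 1 + 1 ≠ δ := hA2 δ
        have e2 : δ + 1 + 1 ≠ δ + 1 := hA1 (δ + 1)
        simp only [thm1StateA, if_neg e1, if_neg e2, if_pos rfl]
        exact basis_orth d 0 (d - 1) (by omega)
      · apply inner_factor _ _ (δ + 1)
        have e1 : δ + 1 ≠ δ := hA1 δ
        have e2 : δ + 1 ≠ δ' := fun h => hc h.symm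
        have e3 : δ + 1 ≠ δ' + 1 := fun h => hδ (add_right_cancel h)
        simp only [thm1StateA, if_neg e1, if_pos rfl, if_neg e2, if_neg e3]
        exact basis_orth d (d - 1) 0 (by omega)
  · intro δ δ' q q' hq1 hq2 hq1' hq2' hne
    by_cases hδ : δ = δ'
    · subst hδ
      have hq : (q : ℕ) ≠ (q' : ℕ) := by
        intro h; exact hne (by rw [Fin.ext h])
      apply inner_factor _ _ (δ + 1)
      have e1 : δ + 1 ≠ δ := hA1 δ
      simp only [thm1StateB, if_neg e1, if_pos rfl]
      exact basis_orth d _ _ hq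
    · by_cases hc : δ' = δ + 1
      · subst hc
        apply inner_factor _ _ (δ + 1 + 1)
        have e1 : δ + 1 + 1 ≠ δ := hA2 δ
        have e2 : δ + 1 + 1 ≠ δ + 1 := hA1 (δ + 1)
        simp only [thm1StateB, if_neg e1, if_neg e2, if_pos rfl]
        exact basis_orth d 0 _ (by omega)
      · apply inner_factor _ _ (δ + 1)
        have e1 : δ + 1 ≠ δ := hA1 δ
        have e2 : δ + 1 ≠ δ' := fun h => hc h.symm
        have e3 : δ + 1 ≠ δ' + 1 := fun h => hδ (add_right_cancel h)
        simp only [thm1StateB, if_neg e1, if_pos rfl, if_neg e2, if_neg e3]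
        exact basis_orth d _ 0 (by omega)
  · intro δ δ' t q hq1 hq2
    by_cases hδ : δ = δ'
    · subst hδ
      apply inner_factor _ _ (δ + 1)
      have e1 : δ + 1 ≠ δ := hA1 δ
      simp only [thm1StateA, thm1StateB, if_neg e1, if_pos rfl]
      exact basis_orth d (d - 1) _ (by omega)
    · by_cases hc : δ' = δ + 1
      · subst hc
        apply inner_factor _ _ (δ + 1 + 1)
        have e1 : δ + 1 + 1 ≠ δ := hA2 δ
        have e2 : δ + 1 + 1 ≠ δ + 1 := hA1 (δ + 1)
        simp only [thm1StateA, thm1StateB, if_neg e1, if_neg e2, if_pos rfl]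
        exact basis_orth d 0 _ (by omega)
      · apply inner_factor _ _ (δ + 1)
        have e1 : δ + 1 ≠ δ := hA1 δ
        have e2 : δ + 1 ≠ δ' := fun h => hc h.symm
        have e3 : δ + 1 ≠ δ' + 1 := fun h => hδ (add_right_cancel h)
        simp only [thm1StateA, thm1StateB, if_neg e1, if_pos rfl, if_neg e2, if_neg e3]
        exact basis_orth d (d - 1) 0 (by omega)
end

section
/- Let d ≥ 2, n ≥ 3, and ω = e^{2πi/d}. The n(2d−3)+1 product states of Theorem 2 in (ℂ^d)^{⊗n} — the cyclic states with Σ_j ω^{tj}|j⟩ in slot δ and |d−1⟩ in the next slot for t ∈ {1,...,d−1}, the cyclic states with Σ_j ω^{j}|j⟩ in slot δ and |q⟩ in the next slot for q ∈ {1,...,d−2}, and the stopper state (Σ_j |j⟩)^{⊗n} — are pairwise orthogonal. -/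
/-- cyclic states of Theorem 2: Fourier state with parameter `t` in slot `δ`,
`|d-1⟩` in slot `δ+1` (cyclically), `|0⟩` elsewhere. -/
noncomputable def thm2StateA (n d : ℕ) [NeZero n] (δ : Fin n) (t : Fin d) :
    Fin n → Fin d → ℂ :=
  fun i => if i = δ then fourierVec d (t : ℕ)
    else if i = δ + 1 then basisVec d (d - 1) else basisVec d 0

/-- cyclic states of Theorem 2: Fourier state with parameter `1` in slot `δ`,
`|q⟩` in slot `δ+1` (cyclically), `|0⟩` elsewhere. -/
noncomputable def thm2StateB (n d : ℕ) [NeZero n] (δ : Fin n) (q : Fin d) :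
    Fin n → Fin d → ℂ :=
  fun i => if i = δ then fourierVec d 1
    else if i = δ + 1 then basisVec d (q : ℕ) else basisVec d 0

/-- the stopper state `(Σ_j |j⟩)^{⊗ n}`. -/
def thm2Stopper (n d : ℕ) : Fin n → Fin d → ℂ := fun _ _ => 1

lemma isPrim {d : ℕ} (hd : d ≠ 0) : IsPrimitiveRoot (rootOfUnity' d) d :=
  Complex.isPrimitiveRoot_exp d hd

lemma tensorInner_eq_zero {n d : ℕ} (f f' : Fin n → Fin d → ℂ) (i : Fin n)
    (h : ∑ j, (starRingEnd ℂ) (f i j) * f' i j = 0) :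
    tensorInner (tensorProdState f) (tensorProdState f') = 0 := by
  rw [tensorInner_eq_prod]
  exact Finset.prod_eq_zero (Finset.mem_univ i) h

lemma sum_root_pow_eq_zero {d : ℕ} (hd : d ≠ 0) {k : ℕ} (hk : ¬ d ∣ k) :
    ∑ j : Fin d, rootOfUnity' d ^ (k * (j : ℕ)) = 0 := by
  have hp := isPrim hd
  have hζ1 : rootOfUnity' d ^ k ≠ 1 := fun h => hk ((hp.pow_eq_one_iff_dvd k).mp h)
  have hζd : (rootOfUnity' d ^ k) ^ d = 1 := by
    rw [← pow_mul, mul_comm, pow_mul, hp.pow_eq_one, one_pow]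
  simp only [pow_mul]
  rw [Fin.sum_univ_eq_sum_range (fun j => (rootOfUnity' d ^ k) ^ j), geom_sum_eq hζ1, hζd,
    sub_self, zero_div]

lemma conj_root_pow {d : ℕ} (hd : d ≠ 0) (m : ℕ) :
    (starRingEnd ℂ) (rootOfUnity' d ^ m) = rootOfUnity' d ^ ((d - 1) * m) := by
  have hinv : (starRingEnd ℂ) (rootOfUnity' d) = (rootOfUnity' d)⁻¹ := by
    rw [rootOfUnity', ← Complex.exp_conj, ← Complex.exp_neg]
    congr 1
    simp [map_div₀, Complex.conj_I, map_ofNat]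
    ring
  have h1 : rootOfUnity' d ^ (d - 1) * rootOfUnity' d = 1 := by
    rw [← pow_succ, Nat.sub_add_cancel (Nat.one_le_iff_ne_zero.2 hd), (isPrim hd).pow_eq_one]
  rw [map_pow, hinv, ← (eq_inv_of_mul_eq_one_left h1), ← pow_mul]

lemma not_dvd_key {d t t' : ℕ} (htd : t < d) (ht' : t' < d) (hne : t ≠ t') :
    ¬ d ∣ (d - 1) * t + t' := by
  intro h
  haveI : NeZero d := ⟨by omega⟩
  have h0 : (((d - 1) * t + t' : ℕ) : ZMod d) = 0 :=
    (ZMod.natCast_eq_zero_iff _ _).mpr h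
  rw [Nat.cast_add, Nat.cast_mul, Nat.cast_sub (by omega : 1 ≤ d), ZMod.natCast_self,
    Nat.cast_one, zero_sub] at h0
  have ht : (t' : ZMod d) = (t : ZMod d) := by linear_combination h0
  have h2 := (ZMod.natCast_eq_natCast_iff _ _ _).mp ht
  unfold Nat.ModEq at h2
  rw [Nat.mod_eq_of_lt ht', Nat.mod_eq_of_lt htd] at h2
  exact hne h2.symm

lemma ff_slot {d : ℕ} (hd : 2 ≤ d) {t t' : ℕ} (htd : t < d) (ht'd : t' < d) (hne : t ≠ t') :
    ∑ j : Fin d, (starRingEnd ℂ) (fourierVec d t j) * fourierVec d t' j = 0 := by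
  have hd0 : d ≠ 0 := by omega
  simp only [fourierVec, conj_root_pow hd0, ← pow_add]
  have hexp : ∀ j : Fin d, (d - 1) * (t * (j : ℕ)) + t' * (j : ℕ)
      = ((d - 1) * t + t') * (j : ℕ) := fun j => by ring
  simp only [hexp]
  exact sum_root_pow_eq_zero hd0 (not_dvd_key htd ht'd hne)

lemma fs_slot {d : ℕ} (hd : 2 ≤ d) {t : ℕ} (ht : 1 ≤ t) (htd : t < d) :
    ∑ j : Fin d, (starRingEnd ℂ) (fourierVec d t j) * 1 = 0 := by
  have hd0 : d ≠ 0 := by omega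
  simp only [fourierVec, conj_root_pow hd0, mul_one]
  have hexp : ∀ j : Fin d, (d - 1) * (t * (j : ℕ)) = ((d - 1) * t) * (j : ℕ) :=
    fun j => by ring
  simp only [hexp]
  refine sum_root_pow_eq_zero hd0 ?_
  have := not_dvd_key (t' := 0) htd (by omega) (by omega)
  simpa using this

lemma bb_slot {d k k' : ℕ} (h : k ≠ k') :
    ∑ j : Fin d, (starRingEnd ℂ) (basisVec d k j) * basisVec d k' j = 0 := by
  apply Finset.sum_eq_zero
  intro j _
  by_cases h1 : (j : ℕ) = k
  · have h2 : ¬ (j : ℕ) = k' := by omega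
    simp [basisVec, h1, h2, h]
  · simp [basisVec, h1]

lemma fin_one_val {n : ℕ} [NeZero n] (hn : 3 ≤ n) : ((1 : Fin n) : ℕ) = 1 := by
  rw [Fin.val_one']; exact Nat.mod_eq_of_lt (by omega)

lemma fin_add_one_ne {n : ℕ} [NeZero n] (hn : 3 ≤ n) (δ : Fin n) : δ + 1 ≠ δ := by
  intro h
  have h2 : (1 : Fin n) = 0 := add_eq_left.mp h
  have h3 := congrArg Fin.val h2
  rw [fin_one_val hn] at h3
  simp at h3

lemma fin_two_step {n : ℕ} [NeZero n] (hn : 3 ≤ n) (δ δ' : Fin n)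
    (h1 : δ + 1 = δ') (h2 : δ' + 1 = δ) : False := by
  rw [← h1, add_assoc] at h2
  have h3 : (1 + 1 : Fin n) = 0 := add_eq_left.mp h2
  have h4 := congrArg Fin.val h3
  rw [Fin.val_add, fin_one_val hn, Nat.mod_eq_of_lt (by omega : 1 + 1 < n)] at h4
  simp at h4

lemma fin_succ_ne_succ {n : ℕ} [NeZero n] {δ δ' : Fin n} (h : δ ≠ δ') : δ + 1 ≠ δ' + 1 :=
  fun hh => h (add_right_cancel hh)

theorem thm2_states_pairwise_orthogonal (d n : ℕ) [NeZero n] (hd : 2 ≤ d) (hn : 3 ≤ n) :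
    (∀ δ δ' : Fin n, ∀ t t' : Fin d, 1 ≤ (t : ℕ) → 1 ≤ (t' : ℕ) → (δ, t) ≠ (δ', t') →
      tensorInner (tensorProdState (thm2StateA n d δ t))
        (tensorProdState (thm2StateA n d δ' t')) = 0) ∧
    (∀ δ δ' : Fin n, ∀ q q' : Fin d,
      1 ≤ (q : ℕ) → (q : ℕ) ≤ d - 2 → 1 ≤ (q' : ℕ) → (q' : ℕ) ≤ d - 2 →
      (δ, q) ≠ (δ', q') →
      tensorInner (tensorProdState (thm2StateB n d δ q))
        (tensorProdState (thm2StateB n d δ' q')) = 0) ∧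
    (∀ δ δ' : Fin n, ∀ t q : Fin d, 1 ≤ (t : ℕ) → 1 ≤ (q : ℕ) → (q : ℕ) ≤ d - 2 →
      tensorInner (tensorProdState (thm2StateA n d δ t))
        (tensorProdState (thm2StateB n d δ' q)) = 0) ∧
    (∀ δ : Fin n, ∀ t : Fin d, 1 ≤ (t : ℕ) →
      tensorInner (tensorProdState (thm2StateA n d δ t))
        (tensorProdState (thm2Stopper n d)) = 0) ∧
    (∀ δ : Fin n, ∀ q : Fin d, 1 ≤ (q : ℕ) → (q : ℕ) ≤ d - 2 →
      tensorInner (tensorProdState (thm2StateB n d δ q))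
        (tensorProdState (thm2Stopper n d)) = 0) := by
  refine ⟨?_, ?_, ?_, ?_, ?_⟩
  · -- A vs A
    intro δ δ' t t' ht ht' hne
    by_cases hδ : δ = δ'
    · subst hδ
      have htt' : t ≠ t' := fun h => hne (by rw [h])
      apply tensorInner_eq_zero _ _ δ
      have e1 : thm2StateA n d δ t δ = fourierVec d (t : ℕ) := by simp [thm2StateA]
      have e2 : thm2StateA n d δ t' δ = fourierVec d (t' : ℕ) := by simp [thm2StateA]
      simp only [e1, e2]
      exact ff_slot hd t.isLt t'.isLt (fun h => htt' (Fin.ext h))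
    · by_cases h1 : δ' + 1 = δ
      · apply tensorInner_eq_zero _ _ (δ + 1)
        have hne1 : δ + 1 ≠ δ := fin_add_one_ne hn δ
        have hne2 : δ + 1 ≠ δ' := fun h => fin_two_step hn δ δ' h h1
        have hne3 : δ + 1 ≠ δ' + 1 := fin_succ_ne_succ hδ
        have e1 : thm2StateA n d δ t (δ + 1) = basisVec d (d - 1) := by
          simp [thm2StateA, hne1]
        have e2 : thm2StateA n d δ' t' (δ + 1) = basisVec d 0 := by
          simp [thm2StateA, hne2, hne3]
        simp only [e1, e2]
        exact bb_slot (by omega)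
      · apply tensorInner_eq_zero _ _ (δ' + 1)
        have hne1 : δ' + 1 ≠ δ' := fin_add_one_ne hn δ'
        have hne3 : δ' + 1 ≠ δ + 1 := fin_succ_ne_succ (Ne.symm hδ)
        have e1 : thm2StateA n d δ t (δ' + 1) = basisVec d 0 := by
          simp [thm2StateA, h1, hne3]
        have e2 : thm2StateA n d δ' t' (δ' + 1) = basisVec d (d - 1) := by
          simp [thm2StateA, hne1]
        simp only [e1, e2]
        exact bb_slot (by omega)
  · -- B vs B
    intro δ δ' q q' hq1 hq2 hq'1 hq'2 hne
    by_cases hδ : δ = δ'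
    · subst hδ
      have hqq' : q ≠ q' := fun h => hne (by rw [h])
      apply tensorInner_eq_zero _ _ (δ + 1)
      have hne1 : δ + 1 ≠ δ := fin_add_one_ne hn δ
      have e1 : thm2StateB n d δ q (δ + 1) = basisVec d (q : ℕ) := by
        simp [thm2StateB, hne1]
      have e2 : thm2StateB n d δ q' (δ + 1) = basisVec d (q' : ℕ) := by
        simp [thm2StateB, hne1]
      simp only [e1, e2]
      exact bb_slot (fun h => hqq' (Fin.ext h))
    · by_cases h1 : δ' + 1 = δ
      · apply tensorInner_eq_zero _ _ (δ + 1)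
        have hne1 : δ + 1 ≠ δ := fin_add_one_ne hn δ
        have hne2 : δ + 1 ≠ δ' := fun h => fin_two_step hn δ δ' h h1
        have hne3 : δ + 1 ≠ δ' + 1 := fin_succ_ne_succ hδ
        have e1 : thm2StateB n d δ q (δ + 1) = basisVec d (q : ℕ) := by
          simp [thm2StateB, hne1]
        have e2 : thm2StateB n d δ' q' (δ + 1) = basisVec d 0 := by
          simp [thm2StateB, hne2, hne3]
        simp only [e1, e2]
        exact bb_slot (by omega)
      · apply tensorInner_eq_zero _ _ (δ' + 1)
        have hne1 : δ' + 1 ≠ δ' := fin_add_one_ne hn δ'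
        have hne3 : δ' + 1 ≠ δ + 1 := fin_succ_ne_succ (Ne.symm hδ)
        have e1 : thm2StateB n d δ q (δ' + 1) = basisVec d 0 := by
          simp [thm2StateB, h1, hne3]
        have e2 : thm2StateB n d δ' q' (δ' + 1) = basisVec d (q' : ℕ) := by
          simp [thm2StateB, hne1]
        simp only [e1, e2]
        exact bb_slot (by omega)
  · -- A vs B
    intro δ δ' t q ht hq1 hq2
    by_cases hδ : δ = δ'
    · subst hδ
      apply tensorInner_eq_zero _ _ (δ + 1)
      have hne1 : δ + 1 ≠ δ := fin_add_one_ne hn δ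
      have e1 : thm2StateA n d δ t (δ + 1) = basisVec d (d - 1) := by
        simp [thm2StateA, hne1]
      have e2 : thm2StateB n d δ q (δ + 1) = basisVec d (q : ℕ) := by
        simp [thm2StateB, hne1]
      simp only [e1, e2]
      exact bb_slot (by omega)
    · by_cases h1 : δ' + 1 = δ
      · apply tensorInner_eq_zero _ _ (δ + 1)
        have hne1 : δ + 1 ≠ δ := fin_add_one_ne hn δ
        have hne2 : δ + 1 ≠ δ' := fun h => fin_two_step hn δ δ' h h1
        have hne3 : δ + 1 ≠ δ' + 1 := fin_succ_ne_succ hδ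
        have e1 : thm2StateA n d δ t (δ + 1) = basisVec d (d - 1) := by
          simp [thm2StateA, hne1]
        have e2 : thm2StateB n d δ' q (δ + 1) = basisVec d 0 := by
          simp [thm2StateB, hne2, hne3]
        simp only [e1, e2]
        exact bb_slot (by omega)
      · apply tensorInner_eq_zero _ _ (δ' + 1)
        have hne1 : δ' + 1 ≠ δ' := fin_add_one_ne hn δ'
        have hne3 : δ' + 1 ≠ δ + 1 := fin_succ_ne_succ (Ne.symm hδ)
        have e1 : thm2StateA n d δ t (δ' + 1) = basisVec d 0 := by
          simp [thm2StateA, h1, hne3]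
        have e2 : thm2StateB n d δ' q (δ' + 1) = basisVec d (q : ℕ) := by
          simp [thm2StateB, hne1]
        simp only [e1, e2]
        exact bb_slot (by omega)
  · -- A vs stopper
    intro δ t ht
    apply tensorInner_eq_zero _ _ δ
    have e1 : thm2StateA n d δ t δ = fourierVec d (t : ℕ) := by simp [thm2StateA]
    simp only [e1, thm2Stopper]
    exact fs_slot hd ht t.isLt
  · -- B vs stopper
    intro δ q hq1 hq2
    apply tensorInner_eq_zero _ _ δ
    have e1 : thm2StateB n d δ q δ = fourierVec d 1 := by simp [thm2StateB]
    simp only [e1, thm2Stopper]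
    exact fs_slot hd le_rfl (by omega)
end
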